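/- Combining the two structural lemmas: let M = [A I] with A ∈ ℝ^{m×n} and I ∈ ℝ^{m×k} having first r rows zero and remaining rows equal to −ρΛ^{-1} (Λ invertible diagonal, ρ > 0), let W ⊆ {1,…,m} with i ∉ W, and let L (unit lower triangular), D (diagonal, nonsingular) satisfy [M]_W [M]_W^T = L D L^T. Then the LDL^T update quantities for appending row i satisfy L D l = [A]_W [A]_i^T and δ = [A]_i [A]_i^T − l^T D l + ρ²(Λ^{-2})_{kk} if i > r (with k = i − r), and δ = [A]_i [A]_i^T − l^T D l if i ≤ r. -/

import Mathlib

open Matrix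

/-- LDLᵀ update using only `A`.  With `M = [A B]`, `B` having
first `r` rows zero and remaining rows `-ρΛ⁻¹` (`Λ` invertible diagonal with
entries `Λd`, `ρ > 0`), `W` a working set with `i ∉ W`, and `L` (unit lower
triangular), `D` (diagonal, nonsingular) satisfying `[M]_W [M]_Wᵀ = L D Lᵀ`,
suppose `l` and `δ` are the standard update quantities `L D l = [M]_W [M]_iᵀ`,
`δ = [M]_i [M]_iᵀ − lᵀ D l`.  Then `L D l = [A]_W [A]_iᵀ`, and
`δ = [A]_i [A]_iᵀ − lᵀ D l + ρ²(Λ⁻²)_{kk}` if `r ≤ i` (with `k = i − r`),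
while `δ = [A]_i [A]_iᵀ − lᵀ D l` if `i < r`. -/
theorem stmt10 {m n r : ℕ} (hr : r ≤ m)
    (A : Matrix (Fin m) (Fin n) ℝ) (B : Matrix (Fin m) (Fin (m - r)) ℝ)
    (Λd : ℕ → ℝ) (hΛd : ∀ j, Λd j ≠ 0) (ρ : ℝ) (hρ : 0 < ρ)
    (hB0 : ∀ i : Fin m, (i : ℕ) < r → ∀ c, B i c = 0)
    (hB1 : ∀ i : Fin m, r ≤ (i : ℕ) → ∀ c : Fin (m - r),
      B i c = if (c : ℕ) = (i : ℕ) - r then -ρ * (Λd ((i : ℕ) - r))⁻¹ else 0)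
    (M : Matrix (Fin m) (Fin n ⊕ Fin (m - r)) ℝ) (hM : M = Matrix.fromCols A B)
    (W : Finset (Fin m)) (i : Fin m) (hiW : i ∉ W)
    (L D : Matrix {j // j ∈ W} {j // j ∈ W} ℝ)
    (hLlow : ∀ a b : {j // j ∈ W}, a < b → L a b = 0) (hLdiag : ∀ a, L a a = 1)
    (hDdiag : ∀ a b : {j // j ∈ W}, a ≠ b → D a b = 0) (hDnz : ∀ a, D a a ≠ 0)
    (hfact : ∀ a b : {j // j ∈ W}, M a.val ⬝ᵥ M b.val = (L * D * Lᵀ) a b)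
    (l : {j // j ∈ W} → ℝ)
    (hl : (L * D) *ᵥ l = fun a : {j // j ∈ W} => M a.val ⬝ᵥ M i)
    (δ : ℝ) (hδ : δ = M i ⬝ᵥ M i - ∑ a, l a * D a a * l a) :
    ((L * D) *ᵥ l = fun a : {j // j ∈ W} => A a.val ⬝ᵥ A i) ∧
    (r ≤ (i : ℕ) →
      δ = A i ⬝ᵥ A i - (∑ a, l a * D a a * l a)
          + ρ ^ 2 * ((Λd ((i : ℕ) - r))⁻¹) ^ 2) ∧
    ((i : ℕ) < r → δ = A i ⬝ᵥ A i - ∑ a, l a * D a a * l a) := by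
  subst hM
  have hsplit : ∀ a b : Fin m,
      (fromCols A B) a ⬝ᵥ (fromCols A B) b = A a ⬝ᵥ A b + B a ⬝ᵥ B b := by
    intro a b
    simp [dotProduct, fromCols, Fintype.sum_sum_type]
  have hBzero : ∀ a b : Fin m, a ≠ b → B a ⬝ᵥ B b = 0 := by
    intro a b hab
    by_cases ha : (a : ℕ) < r
    · simp [dotProduct, hB0 a ha]
    by_cases hb : (b : ℕ) < r
    · simp [dotProduct, hB0 b hb]
    push_neg at ha hb
    apply Finset.sum_eq_zero
    intro c _
    rw [hB1 a ha c, hB1 b hb c]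
    by_cases h1 : (c : ℕ) = (a : ℕ) - r
    · have h2 : (c : ℕ) ≠ (b : ℕ) - r := by
        intro h2
        apply hab
        apply Fin.ext
        omega
      rw [if_neg h2, mul_zero]
    · simp [h1]
  have hBii : r ≤ (i : ℕ) → B i ⬝ᵥ B i = ρ ^ 2 * ((Λd ((i : ℕ) - r))⁻¹) ^ 2 := by
    intro hi
    have hlt : (i : ℕ) - r < m - r := by omega
    rw [dotProduct]
    rw [Finset.sum_eq_single (⟨(i : ℕ) - r, hlt⟩ : Fin (m - r))]
    · rw [hB1 i hi]
      simp; ring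
    · intro c _ hc
      rw [hB1 i hi c]
      have : (c : ℕ) ≠ (i : ℕ) - r := fun h => hc (Fin.ext h)
      simp [this]
    · simp
  refine ⟨?_, ?_, ?_⟩
  · rw [hl]
    funext a
    have hne : a.val ≠ i := fun h => hiW (h ▸ a.property)
    rw [hsplit, hBzero _ _ hne, add_zero]
  · intro hi
    rw [hδ, hsplit, hBii hi]; ring
  · intro hi
    have : B i ⬝ᵥ B i = 0 := by simp [dotProduct, hB0 i hi]
    rw [hδ, hsplit, this]; ring
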